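/- Let p ≥ 3 be a prime and let μ be a probability distribution on F_p. Call a random variable X taking values in F_p ε-almost-uniform if |Pr[X = z] − 1/p| ≤ ε for all z ∈ F_p. Suppose μ is supported on more than one value. Then for any ε > 0, there exists Q ∈ ℕ such that for every n and every vector h ∈ F_p^n with at least Q nonzero entries, if x ∈ F_p^n is a random vector with independent μ-distributed entries, then the inner product h·x = Σ_{i=1}^n h_i x_i is ε-almost-uniform. -/

import Mathlib

open scoped Classical
noncomputable section
namespace IPAU
variable {p : ℕ} [Fact p.Prime] (μ : ZMod p → ℝ)

def eta (c : ZMod p) : ZMod p → ℝ := fun y => ∑ a : ZMod p, if c * a = y then μ a else 0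

def conv (f g : ZMod p → ℝ) : ZMod p → ℝ := fun z => ∑ y : ZMod p, f y * g (z - y)

def W : List (ZMod p) → ZMod p → ℝ
  | [] => fun z => if z = 0 then 1 else 0
  | c :: l => conv (eta μ c) (W l)

lemma conv_eta (c : ZMod p) (g : ZMod p → ℝ) (z : ZMod p) :
    conv (eta μ c) g z = ∑ a : ZMod p, μ a * g (z - c * a) := by
  unfold conv eta
  simp_rw [Finset.sum_mul, ite_mul, zero_mul]
  rw [Finset.sum_comm]
  simp

lemma eta_nonneg (hμ0 : ∀ z, 0 ≤ μ z) (c y : ZMod p) : 0 ≤ eta μ c y :=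
  Finset.sum_nonneg fun a _ => by by_cases h : c * a = y <;> simp [h, hμ0 a]

lemma eta_sum (hμ1 : ∑ z, μ z = 1) (c : ZMod p) : ∑ y, eta μ c y = 1 := by
  unfold eta
  rw [Finset.sum_comm]
  simpa using hμ1

lemma eta_self (hμ0 : ∀ z, 0 ≤ μ z) (c e : ZMod p) : μ e ≤ eta μ c (c * e) := by
  unfold eta
  calc μ e = if c * e = c * e then μ e else 0 := by simp
  _ ≤ _ := Finset.single_le_sum (f := fun a => if c * a = c * e then μ a else 0)
      (fun a _ => by by_cases h : c * a = c * e <;> simp [h, hμ0 a]) (Finset.mem_univ e)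

lemma conv_comm (f g : ZMod p → ℝ) (z : ZMod p) : conv f g z = conv g f z := by
  unfold conv
  refine Fintype.sum_equiv (Equiv.subLeft z) _ _ fun y => ?_
  simp [Equiv.subLeft, mul_comm]

lemma conv_assoc (f g h : ZMod p → ℝ) (z : ZMod p) :
    conv (conv f g) h z = conv f (conv g h) z := by
  unfold conv
  simp_rw [Finset.sum_mul, Finset.mul_sum]
  rw [Finset.sum_comm]
  refine Finset.sum_congr rfl fun w _ => ?_
  refine Fintype.sum_equiv (Equiv.subRight w) _ _ fun y => ?_
  show f w * g (y - w) * h (z - y) = f w * (g (y - w) * h (z - w - (y - w)))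
  rw [sub_sub_sub_cancel_right, mul_assoc]

lemma conv_sum (f g : ZMod p → ℝ) :
    ∑ z, conv f g z = (∑ y, f y) * (∑ w, g w) := by
  unfold conv
  rw [Finset.sum_comm, Finset.sum_mul]
  refine Finset.sum_congr rfl fun y _ => ?_
  rw [← Finset.mul_sum]
  congr 1
  exact Fintype.sum_equiv (Equiv.subRight y) (fun z => g (z - y)) g (fun z => rfl)

lemma conv_nonneg' {f g : ZMod p → ℝ} (hf : ∀ y, 0 ≤ f y) (hg : ∀ y, 0 ≤ g y) (z : ZMod p) :
    0 ≤ conv f g z :=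
  Finset.sum_nonneg fun y _ => mul_nonneg (hf y) (hg _)

lemma W_nonneg (hμ0 : ∀ z, 0 ≤ μ z) : ∀ l z, 0 ≤ W μ l z
  | [], z => by unfold W; split <;> norm_num
  | c :: l, z => conv_nonneg' (eta_nonneg μ hμ0 c) (W_nonneg hμ0 l) z

lemma W_sum (hμ1 : ∑ z, μ z = 1) : ∀ l, ∑ z, W μ l z = 1
  | [] => by simp [W]
  | c :: l => by
      show ∑ z, conv (eta μ c) (W μ l) z = 1
      rw [conv_sum, eta_sum μ hμ1, W_sum hμ1 l, one_mul]

lemma W_perm {l₁ l₂ : List (ZMod p)} (hp : l₁.Perm l₂) : W μ l₁ = W μ l₂ := by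
  induction hp with
  | nil => rfl
  | cons c _ ih => show conv _ _ = conv _ _; rw [ih]
  | swap a b l =>
      show conv (eta μ _) (conv (eta μ _) (W μ l)) = conv (eta μ _) (conv (eta μ _) (W μ l))
      funext z
      rw [← conv_assoc, ← conv_assoc]
      exact Finset.sum_congr rfl fun y _ => by rw [conv_comm]
  | trans _ _ ih₁ ih₂ => rw [ih₁, ih₂]

lemma W_append (l₁ l₂ : List (ZMod p)) (z : ZMod p) :
    W μ (l₁ ++ l₂) z = conv (W μ l₁) (W μ l₂) z := by
  induction l₁ generalizing z with
  | nil => show W μ l₂ z = _; unfold conv W; simp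
  | cons c l ih =>
      show conv (eta μ c) (W μ (l ++ l₂)) z = conv (conv (eta μ c) (W μ l)) (W μ l₂) z
      rw [conv_assoc]
      unfold conv
      exact Finset.sum_congr rfl fun y _ => by rw [ih]; rfl
lemma translate_closed_eq_univ {A : Finset (ZMod p)} (hA : A.Nonempty) {d : ZMod p} (hd : d ≠ 0)
    (hcl : ∀ x ∈ A, x + d ∈ A) : A = Finset.univ := by
  obtain ⟨a, ha⟩ := hA
  have key : ∀ n : ℕ, a + n • d ∈ A := by
    intro n
    induction n with
    | zero => simpa using ha
    | succ n ih =>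
        have := hcl _ ih
        rwa [add_assoc, ← succ_nsmul] at this
  refine Finset.eq_univ_of_forall fun z => ?_
  have hz : z = a + ((z - a) * d⁻¹).val • d := by
    rw [nsmul_eq_mul, ZMod.natCast_val, ZMod.cast_id, mul_assoc,
      inv_mul_cancel₀ hd, mul_one, add_sub_cancel]
  rw [hz]; exact key _

lemma union_translate_card {A : Finset (ZMod p)} (hA : A.Nonempty) {d : ZMod p} (hd : d ≠ 0) :
    min p (A.card + 1) ≤ (A ∪ A.image (· + d)).card := by
  by_cases hsub : A.image (· + d) ⊆ A
  · have himg : A.image (· + d) = A :=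
      Finset.eq_of_subset_of_card_le hsub
        (le_of_eq (Finset.card_image_of_injective A (add_left_injective d)).symm)
    have : A = Finset.univ := by
      refine translate_closed_eq_univ hA hd fun x hx => ?_
      rw [← himg]; exact Finset.mem_image_of_mem _ hx
    calc min p (A.card + 1) ≤ p := min_le_left _ _
      _ = (Finset.univ : Finset (ZMod p)).card := by
          rw [Finset.card_univ, ZMod.card]
      _ ≤ _ := Finset.card_le_card (by rw [← this]; exact Finset.subset_union_left)
  · obtain ⟨x, hx, hx'⟩ := Finset.not_subset.mp hsub
    calc min p (A.card + 1) ≤ A.card + 1 := min_le_right _ _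
      _ = (insert x A).card := (Finset.card_insert_of_notMem hx').symm
      _ ≤ _ := Finset.card_le_card (Finset.insert_subset
          (Finset.mem_union_right _ hx) Finset.subset_union_left)

lemma sum_translate (g : ZMod p → ℝ) (z : ZMod p) : ∑ y, g (z - y) = ∑ y, g y :=
  Fintype.sum_equiv (Equiv.subLeft z) _ _ fun y => rfl

lemma sum_translate' (g : ZMod p → ℝ) (y : ZMod p) : ∑ z, g (z - y) = ∑ z, g z :=
  Fintype.sum_equiv (Equiv.subRight y) (fun z => g (z - y)) g fun z => rfl

lemma minor_card (hμ0 : ∀ z, 0 ≤ μ z) {a b : ZMod p} (hab : a ≠ b) {m : ℝ}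
    (hm0 : 0 ≤ m) (hma : m ≤ μ a) (hmb : m ≤ μ b) :
    ∀ l : List (ZMod p), (∀ c ∈ l, c ≠ 0) →
      min p (l.length + 1) ≤ (Finset.univ.filter fun y => m ^ l.length ≤ W μ l y).card := by
  intro l
  induction l with
  | nil =>
      intro _
      have h0 : (0 : ZMod p) ∈ (Finset.univ.filter fun y => m ^ ([] : List (ZMod p)).length ≤ W μ [] y) := by
        simp [W]
      calc min p (0 + 1) ≤ 1 := min_le_right _ _
        _ ≤ _ := Finset.card_pos.mpr ⟨0, h0⟩
  | cons c l ih =>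
      intro hne
      have hc : c ≠ 0 := hne c (List.mem_cons_self)
      have hl : ∀ x ∈ l, x ≠ 0 := fun x hx => hne x (List.mem_cons_of_mem c hx)
      set A := (Finset.univ.filter fun y => m ^ l.length ≤ W μ l y) with hA
      have hAcard : min p (l.length + 1) ≤ A.card := ih hl
      have hAne : A.Nonempty := by
        refine Finset.card_pos.mp ?_
        have : 1 ≤ min p (l.length + 1) := le_min (Fact.out : p.Prime).one_lt.le (by omega)
        omega
      -- key: translates of A land in the new filter set
      have key : ∀ e : ZMod p, m ≤ μ e → ∀ y ∈ A, y + c * e ∈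
          (Finset.univ.filter fun w => m ^ (c :: l).length ≤ W μ (c :: l) w) := by
        intro e he y hy
        have hyW : m ^ l.length ≤ W μ l y := (Finset.mem_filter.mp hy).2
        refine Finset.mem_filter.mpr ⟨Finset.mem_univ _, ?_⟩
        have hexp : W μ (c :: l) (y + c * e) = ∑ a', μ a' * W μ l (y + c * e - c * a') :=
          conv_eta μ c _ _
        have hterm : m * m ^ l.length ≤ μ e * W μ l (y + c * e - c * e) := by
          rw [add_sub_cancel_right]
          exact mul_le_mul he hyW (pow_nonneg hm0 _) (hμ0 e)
        calc m ^ (c :: l).length = m * m ^ l.length := by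
              rw [List.length_cons, pow_succ']
          _ ≤ μ e * W μ l (y + c * e - c * e) := hterm
          _ ≤ ∑ a', μ a' * W μ l (y + c * e - c * a') :=
              Finset.single_le_sum (f := fun a' => μ a' * W μ l (y + c * e - c * a'))
                (fun a' _ => mul_nonneg (hμ0 a') (W_nonneg μ hμ0 l _)) (Finset.mem_univ e)
          _ = _ := hexp.symm
      set B := A.image (· + c * a) with hB
      have hd : c * b - c * a ≠ 0 := by
        rw [← mul_sub]
        exact mul_ne_zero hc (sub_ne_zero.mpr (Ne.symm hab))
      have hBim : B.image (· + (c * b - c * a)) = A.image (· + c * b) := by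
        rw [hB, Finset.image_image]
        refine Finset.image_congr fun x _ => ?_
        simp [Function.comp]
      have hBne : B.Nonempty := hAne.image _
      have hsub : B ∪ B.image (· + (c * b - c * a)) ⊆
          (Finset.univ.filter fun w => m ^ (c :: l).length ≤ W μ (c :: l) w) := by
        rw [hBim]
        intro x hx
        rcases Finset.mem_union.mp hx with hx | hx
        · obtain ⟨y, hy, rfl⟩ := Finset.mem_image.mp hx
          exact key a hma y hy
        · obtain ⟨y, hy, rfl⟩ := Finset.mem_image.mp hx
          exact key b hmb y hy
      have hcard : min p (B.card + 1) ≤ (B ∪ B.image (· + (c * b - c * a))).card :=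
        union_translate_card hBne hd
      have hBcard : B.card = A.card := Finset.card_image_of_injective A (add_left_injective _)
      have hfinal := le_trans hcard (Finset.card_le_card hsub)
      rw [hBcard] at hfinal
      have hstep : (c :: l).length = l.length + 1 := List.length_cons
      omega

lemma minor (hμ0 : ∀ z, 0 ≤ μ z) {a b : ZMod p} (hab : a ≠ b) {m : ℝ}
    (hm0 : 0 ≤ m) (hma : m ≤ μ a) (hmb : m ≤ μ b)
    {l : List (ZMod p)} (hne : ∀ c ∈ l, c ≠ 0) (hlen : l.length = p - 1) :
    ∀ y, m ^ (p - 1) ≤ W μ l y := by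
  have hp1 : 1 ≤ p := (Fact.out : p.Prime).one_lt.le
  have h := minor_card μ hμ0 hab hm0 hma hmb l hne
  rw [hlen] at h
  have hmin : min p (p - 1 + 1) = p := by omega
  rw [hmin] at h
  have huniv : (Finset.univ.filter fun y => m ^ (p - 1) ≤ W μ l y) = Finset.univ := by
    refine Finset.eq_univ_of_card _ ?_
    have hle := Finset.card_le_univ (Finset.univ.filter fun y => m ^ (p - 1) ≤ W μ l y)
    rw [ZMod.card] at hle ⊢
    omega
  intro y
  have hy : y ∈ (Finset.univ.filter fun y => m ^ (p - 1) ≤ W μ l y) := by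
    rw [huniv]; exact Finset.mem_univ y
  exact (Finset.mem_filter.mp hy).2

lemma contract' (hμ0 : ∀ z, 0 ≤ μ z) (hμ1 : ∑ z, μ z = 1) {a b : ZMod p} (hab : a ≠ b)
    {m : ℝ} (hm0 : 0 ≤ m) (hma : m ≤ μ a) (hmb : m ≤ μ b) :
    ∀ (B : ℕ) (l : List (ZMod p)), (∀ c ∈ l, c ≠ 0) → (p - 1) * B ≤ l.length →
      ∑ z, |W μ l z - 1 / (p : ℝ)| ≤ 2 * (1 - p * m ^ (p - 1)) ^ B := by
  have hp0 : (0 : ℝ) < p := by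
    exact_mod_cast (Fact.out : p.Prime).pos
  intro B
  induction B with
  | zero =>
      intro l _ _
      rw [pow_zero, mul_one]
      calc ∑ z, |W μ l z - 1 / (p : ℝ)| ≤ ∑ z, (W μ l z + 1 / (p : ℝ)) := by
            refine Finset.sum_le_sum fun z _ => ?_
            have h1 := W_nonneg μ hμ0 l z
            have h2 : (0:ℝ) ≤ 1 / (p : ℝ) := by positivity
            rw [abs_le]
            constructor <;> nlinarith
          _ = 2 := by
            rw [Finset.sum_add_distrib, W_sum μ hμ1, Finset.sum_const, Finset.card_univ,
              ZMod.card, nsmul_eq_mul, mul_one_div, div_self hp0.ne']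
            norm_num
  | succ B ih =>
      intro l hne hlen
      have hp1 : 1 ≤ p := (Fact.out : p.Prime).one_lt.le
      rw [Nat.mul_succ] at hlen
      set α : ℝ := m ^ (p - 1) with hαdef
      set t := l.take (p - 1) with htdef
      set r := l.drop (p - 1) with hrdef
      have htlen : t.length = p - 1 := by
        rw [htdef, List.length_take]; omega
      have hrlen : (p - 1) * B ≤ r.length := by
        rw [hrdef, List.length_drop]; omega
      have htne : ∀ c ∈ t, c ≠ 0 := fun c hc => hne c (List.mem_of_mem_take hc)
      have hrne : ∀ c ∈ r, c ≠ 0 := fun c hc => hne c (List.mem_of_mem_drop hc)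
      have hW : ∀ z, W μ l z = ∑ y, W μ t y * W μ r (z - y) := by
        intro z
        conv_lhs => rw [← List.take_append_drop (p - 1) l]
        rw [W_append]
        rfl
      have hα : ∀ y, α ≤ W μ t y := minor μ hμ0 hab hm0 hma hmb htne htlen
      have hα0 : (0:ℝ) ≤ α := pow_nonneg hm0 _
      have hsumt : ∑ y, (W μ t y - α) = 1 - p * α := by
        rw [Finset.sum_sub_distrib, W_sum μ hμ1, Finset.sum_const, Finset.card_univ,
          ZMod.card, nsmul_eq_mul]
      have hconst0 : (0:ℝ) ≤ 1 - p * α := by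
        rw [← hsumt]
        exact Finset.sum_nonneg fun y _ => sub_nonneg.mpr (hα y)
      have expand : ∀ z, W μ l z - 1 / (p : ℝ) =
          ∑ y, (W μ t y - α) * (W μ r (z - y) - 1 / (p : ℝ)) := by
        intro z
        have e1 : ∑ y, W μ t y * W μ r (z - y) = W μ l z := (hW z).symm
        calc W μ l z - 1 / (p : ℝ)
            = (∑ y, W μ t y * W μ r (z - y)) - (∑ y, W μ t y) * (1 / (p:ℝ))
              - α * (∑ y, W μ r (z - y)) + (p : ℝ) * (α * (1 / (p:ℝ))) := by
              rw [e1, W_sum μ hμ1, sum_translate, W_sum μ hμ1]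
              field_simp
              ring
          _ = ∑ y, (W μ t y - α) * (W μ r (z - y) - 1 / (p : ℝ)) := by
              rw [Finset.sum_mul, Finset.mul_sum]
              rw [← Finset.sum_sub_distrib, ← Finset.sum_sub_distrib]
              have : (p : ℝ) * (α * (1 / (p:ℝ))) = ∑ _y : ZMod p, α * (1 / (p:ℝ)) := by
                rw [Finset.sum_const, Finset.card_univ, ZMod.card, nsmul_eq_mul]
              rw [this, ← Finset.sum_add_distrib]
              exact Finset.sum_congr rfl fun y _ => by ring
      have IH := ih r hrne hrlen
      have L0 : (0:ℝ) ≤ ∑ z, |W μ r z - 1 / (p : ℝ)| :=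
        Finset.sum_nonneg fun z _ => abs_nonneg _
      calc ∑ z, |W μ l z - 1 / (p : ℝ)|
          = ∑ z, |∑ y, (W μ t y - α) * (W μ r (z - y) - 1 / (p : ℝ))| := by
            exact Finset.sum_congr rfl fun z _ => by rw [expand]
        _ ≤ ∑ z, ∑ y, (W μ t y - α) * |W μ r (z - y) - 1 / (p : ℝ)| := by
            refine Finset.sum_le_sum fun z _ => ?_
            refine (Finset.abs_sum_le_sum_abs _ _).trans ?_
            refine Finset.sum_le_sum fun y _ => ?_
            rw [abs_mul, abs_of_nonneg (sub_nonneg.mpr (hα y))]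
        _ = ∑ y, (W μ t y - α) * ∑ z, |W μ r (z - y) - 1 / (p : ℝ)| := by
            rw [Finset.sum_comm]
            exact Finset.sum_congr rfl fun y _ => by rw [Finset.mul_sum]
        _ = (1 - p * α) * ∑ z, |W μ r z - 1 / (p : ℝ)| := by
            rw [← hsumt, Finset.sum_mul]
            refine Finset.sum_congr rfl fun y _ => ?_
            congr 1
            exact sum_translate' (fun w => |W μ r w - 1 / (p : ℝ)|) y
        _ ≤ (1 - p * α) * (2 * (1 - p * α) ^ B) := by
            exact mul_le_mul_of_nonneg_left IH hconst0
        _ = 2 * (1 - p * α) ^ (B + 1) := by ring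

lemma contract (hμ0 : ∀ z, 0 ≤ μ z) (hμ1 : ∑ z, μ z = 1) {a b : ZMod p} (hab : a ≠ b)
    {m : ℝ} (hm0 : 0 ≤ m) (hma : m ≤ μ a) (hmb : m ≤ μ b)
    (B : ℕ) (l : List (ZMod p))
    (hcount : (p - 1) * B ≤ l.countP (fun c => decide (c ≠ 0))) :
    ∑ z, |W μ l z - 1 / (p : ℝ)| ≤ 2 * (1 - p * m ^ (p - 1)) ^ B := by
  have hp0 : (0 : ℝ) < p := by exact_mod_cast (Fact.out : p.Prime).pos
  set q : ZMod p → Bool := fun c => decide (c ≠ 0) with hq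
  have hperm : (l.filter q ++ l.filter (fun c => !q c)).Perm l := List.filter_append_perm q l
  have hWl : W μ l = W μ (l.filter q ++ l.filter fun c => !q c) := (W_perm μ hperm).symm
  set f := W μ (l.filter q) with hf
  set g := W μ (l.filter fun c => !q c) with hg
  have hg1 : ∑ z, g z = 1 := W_sum μ hμ1 _
  have hg0 : ∀ z, 0 ≤ g z := W_nonneg μ hμ0 _
  have expand : ∀ z, W μ l z - 1 / (p : ℝ) = ∑ y, (f y - 1 / (p : ℝ)) * g (z - y) := by
    intro z
    have e1 : W μ l z = ∑ y, f y * g (z - y) := by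
      rw [hWl, W_append]; rfl
    have e2 : (1 : ℝ) / p = ∑ y, (1 / (p : ℝ)) * g (z - y) := by
      rw [← Finset.mul_sum, sum_translate, hg1, mul_one]
    rw [e1]
    conv_lhs => rw [e2]
    rw [← Finset.sum_sub_distrib]
    exact Finset.sum_congr rfl fun y _ => by ring
  have hfilter_ne : ∀ c ∈ l.filter q, c ≠ 0 := by
    intro c hc
    have h1 := List.of_mem_filter hc
    rw [hq] at h1
    exact of_decide_eq_true h1
  have hfilter_len : (p - 1) * B ≤ (l.filter q).length := by
    rwa [← List.countP_eq_length_filter]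
  have main := contract' μ hμ0 hμ1 hab hm0 hma hmb B (l.filter q) hfilter_ne hfilter_len
  calc ∑ z, |W μ l z - 1 / (p : ℝ)|
      = ∑ z, |∑ y, (f y - 1 / (p : ℝ)) * g (z - y)| :=
        Finset.sum_congr rfl fun z _ => by rw [expand]
    _ ≤ ∑ z, ∑ y, |f y - 1 / (p : ℝ)| * g (z - y) := by
        refine Finset.sum_le_sum fun z _ => ?_
        refine (Finset.abs_sum_le_sum_abs _ _).trans ?_
        refine Finset.sum_le_sum fun y _ => ?_
        rw [abs_mul, abs_of_nonneg (hg0 _)]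
    _ = ∑ y, |f y - 1 / (p : ℝ)| * ∑ z, g (z - y) := by
        rw [Finset.sum_comm]
        exact Finset.sum_congr rfl fun y _ => by rw [Finset.mul_sum]
    _ = ∑ y, |f y - 1 / (p : ℝ)| := by
        refine Finset.sum_congr rfl fun y _ => ?_
        rw [sum_translate' g y, hg1, mul_one]
    _ ≤ _ := main

lemma bridge : ∀ (n : ℕ) (h : Fin n → ZMod p) (z : ZMod p),
    (∑ x ∈ Finset.univ.filter (fun x : Fin n → ZMod p => ∑ i, h i * x i = z),
      ∏ i, μ (x i)) = W μ (List.ofFn h) z := by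
  intro n
  induction n with
  | zero =>
      intro h z
      rw [Finset.sum_filter]
      simp [W, eq_comm]
  | succ n ih =>
      intro h z
      rw [Finset.sum_filter]
      rw [← Equiv.sum_comp (Fin.consEquiv fun _ : Fin (n + 1) => ZMod p)
        (fun x => if ∑ i, h i * x i = z then ∏ i, μ (x i) else 0)]
      rw [Fintype.sum_prod_type]
      have : W μ (List.ofFn h) z = ∑ a : ZMod p, μ a * W μ (List.ofFn fun i => h i.succ) (z - h 0 * a) := by
        rw [List.ofFn_succ]
        exact conv_eta μ (h 0) _ z
      rw [this]
      refine Finset.sum_congr rfl fun a _ => ?_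
      rw [← ih (fun i => h i.succ) (z - h 0 * a), Finset.sum_filter, Finset.mul_sum]
      refine Finset.sum_congr rfl fun y _ => ?_
      have hsum : ∑ i, h i * (Fin.consEquiv fun _ : Fin (n + 1) => ZMod p) (a, y) i
          = h 0 * a + ∑ i, h i.succ * y i := by
        simp [Fin.consEquiv, Fin.sum_univ_succ]
      have hprod : ∏ i, μ ((Fin.consEquiv fun _ : Fin (n + 1) => ZMod p) (a, y) i)
          = μ a * ∏ i, μ (y i) := by
        simp [Fin.consEquiv, Fin.prod_univ_succ]
      rw [hsum, hprod]
      by_cases hcase : ∑ i, h i.succ * y i = z - h 0 * a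
      · rw [if_pos hcase, if_pos (by rw [hcase]; ring)]
      · rw [if_neg hcase, if_neg (fun hc => hcase (by rw [← hc]; ring)), mul_zero]

lemma cardBridge : ∀ (n : ℕ) (h : Fin n → ZMod p),
    (Finset.univ.filter (fun i => h i ≠ 0)).card = (List.ofFn h).countP (fun c => decide (c ≠ 0)) := by
  intro n
  induction n with
  | zero => intro h; simp
  | succ n ih =>
      intro h
      rw [Finset.card_filter, Fin.sum_univ_succ, List.ofFn_succ, List.countP_cons,
        ← Finset.card_filter, ih fun i => h i.succ]
      by_cases h0 : h 0 ≠ 0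
      · rw [if_pos h0]
        simp [h0]
        omega
      · rw [if_neg h0]
        simp [h0]

end IPAU

end

open IPAU in
/-- For a prime `p ≥ 3`, a distribution `μ` on `F_p` supported on more than one value, and any
`ε > 0`, there is `Q ∈ ℕ` such that: for every `n` and every `h ∈ F_p^n` with at least `Q`
nonzero entries, if `x ∈ F_p^n` has independent `μ`-distributed entries then the inner product
`h · x` is `ε`-almost-uniform, i.e. `|Pr[h · x = z] - 1/p| ≤ ε` for all `z ∈ F_p`. -/
theorem inner_product_almost_uniform (p : ℕ) [Fact p.Prime] (hp3 : 3 ≤ p)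
    (μ : ZMod p → ℝ) (hμ0 : ∀ z, 0 ≤ μ z) (hμ1 : ∑ z, μ z = 1)
    (hμsupp : ∃ a b : ZMod p, a ≠ b ∧ μ a ≠ 0 ∧ μ b ≠ 0)
    (ε : ℝ) (hε : 0 < ε) :
    ∃ Q : ℕ, ∀ n : ℕ, ∀ h : Fin n → ZMod p,
      Q ≤ (Finset.univ.filter (fun i => h i ≠ 0)).card →
      ∀ z : ZMod p,
        |(∑ x ∈ Finset.univ.filter (fun x : Fin n → ZMod p => ∑ i, h i * x i = z),
            ∏ i, μ (x i)) - 1 / (p : ℝ)| ≤ ε := by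
  obtain ⟨a, b, hab, ha, hb⟩ := hμsupp
  have hp0 : (0 : ℝ) < p := by exact_mod_cast (Fact.out : p.Prime).pos
  set m : ℝ := min (μ a) (μ b) with hm
  have hm0 : 0 < m := lt_min ((hμ0 a).lt_of_ne' ha) ((hμ0 b).lt_of_ne' hb)
  have hma : m ≤ μ a := min_le_left _ _
  have hmb : m ≤ μ b := min_le_right _ _
  have hmhalf : m ≤ 1 / 2 := by
    have hle : μ a + μ b ≤ 1 := by
      rw [← hμ1, ← Finset.sum_pair hab]
      exact Finset.sum_le_sum_of_subset_of_nonneg (Finset.subset_univ _) fun i _ _ => hμ0 i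
    have : m + m ≤ μ a + μ b := add_le_add hma hmb
    linarith
  set α : ℝ := m ^ (p - 1) with hα
  have hα0 : 0 < α := pow_pos hm0 _
  have hple : p ≤ 2 ^ (p - 1) := by
    have := (p - 1).lt_two_pow_self
    have hp1 : 1 ≤ p := (Fact.out : p.Prime).one_lt.le
    omega
  have hc0 : 0 ≤ 1 - (p : ℝ) * α := by
    have h1 : α ≤ (1 / 2 : ℝ) ^ (p - 1) := pow_le_pow_left₀ hm0.le hmhalf _
    have h2 : ((2 : ℝ)) ^ (p - 1) = ((2 ^ (p - 1) : ℕ) : ℝ) := by push_cast; ring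
    have h3 : (p : ℝ) ≤ (2 : ℝ) ^ (p - 1) := by
      rw [h2]; exact_mod_cast hple
    have h4 : (0 : ℝ) < (2 : ℝ) ^ (p - 1) := by positivity
    have h5 : (p : ℝ) * α ≤ (p : ℝ) * ((1 / 2 : ℝ) ^ (p - 1)) :=
      mul_le_mul_of_nonneg_left h1 hp0.le
    have h6 : (p : ℝ) * ((1 / 2 : ℝ) ^ (p - 1)) ≤ 1 := by
      rw [div_pow, one_pow, mul_one_div, div_le_one h4]
      linarith
    linarith
  have hc1 : 1 - (p : ℝ) * α < 1 := by nlinarith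
  obtain ⟨B, hB⟩ := exists_pow_lt_of_lt_one (half_pos hε) hc1
  refine ⟨(p - 1) * B, fun n h hcard z => ?_⟩
  rw [bridge μ n h z]
  have hcount : (p - 1) * B ≤ (List.ofFn h).countP (fun c => decide (c ≠ 0)) := by
    rw [← cardBridge n h]
    exact hcard
  have htotal := contract μ hμ0 hμ1 hab hm0.le hma hmb B (List.ofFn h) hcount
  have hsingle : |W μ (List.ofFn h) z - 1 / (p : ℝ)| ≤
      ∑ w, |W μ (List.ofFn h) w - 1 / (p : ℝ)| :=
    Finset.single_le_sum (f := fun w => |W μ (List.ofFn h) w - 1 / (p : ℝ)|)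
      (fun w _ => abs_nonneg _) (Finset.mem_univ z)
  calc |W μ (List.ofFn h) z - 1 / (p : ℝ)| ≤ 2 * (1 - (p : ℝ) * α) ^ B :=
        hsingle.trans htotal
    _ ≤ 2 * (ε / 2) := by nlinarith
    _ = ε := by ring
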